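/- Let p be a prime, S a finite p-group, and 𝒻 a fusion system on S such that |S| / (|Hom_𝒻(Q,S)| · |C_S(Q)|) ∈ ℤ_(p) for every Q ≤ S. Then a subgroup P ≤ S is fully 𝒻-normalized if and only if P is fully 𝒻-centralized and Aut_S(P) is a Sylow p-subgroup of Aut_𝒻(P). -/

import Mathlib

/-- A fusion system on a group `S` (morphisms `P → Q` are encoded as injective
homomorphisms `↥P →* S` with range contained in `Q`). -/
structure FusionSystem (S : Type*) [Group S] where
  Hom : ∀ (P : Subgroup S), Subgroup S → Set (↥P →* S)
  range_le : ∀ {P Q : Subgroup S} {φ : ↥P →* S}, φ ∈ Hom P Q → φ.range ≤ Q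
  injective : ∀ {P Q : Subgroup S} {φ : ↥P →* S}, φ ∈ Hom P Q → Function.Injective φ
  conj_mem : ∀ (P Q : Subgroup S) (s : S) (φ : ↥P →* S),
    (∀ p : ↥P, φ p = s * p * s⁻¹) → φ.range ≤ Q → φ ∈ Hom P Q
  comp_mem : ∀ {P Q R : Subgroup S} {φ : ↥P →* S} {ψ : ↥Q →* S} (χ : ↥P →* S),
    φ ∈ Hom P Q → ψ ∈ Hom Q R →
    (∀ (x : ↥P) (y : ↥Q), (y : S) = φ x → χ x = ψ y) → χ ∈ Hom P R
  isoOnto_mem : ∀ {P Q : Subgroup S} {φ : ↥P →* S}, φ ∈ Hom P Q → φ ∈ Hom P φ.range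
  inv_mem : ∀ {P Q : Subgroup S} {φ : ↥P →* S}, φ ∈ Hom P Q →
    ∀ ψ : ↥φ.range →* S, (∀ (x : ↥P) (y : ↥φ.range), (y : S) = φ x → ψ y = x) →
      ψ ∈ Hom φ.range P

/-- `P` and `Q` are `𝒻`-isomorphic. -/
def FIso {S : Type*} [Group S] (𝒻 : FusionSystem S) (P Q : Subgroup S) : Prop :=
  ∃ φ : ↥P →* S, φ ∈ 𝒻.Hom P Q ∧ φ.range = Q

/-- `P` is fully `𝒻`-normalized. -/
def FullyNormalized {S : Type*} [Group S] (𝒻 : FusionSystem S) (P : Subgroup S) : Prop :=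
  ∀ Q : Subgroup S, FIso 𝒻 P Q → Nat.card ↥(Subgroup.normalizer (Q : Set S)) ≤ Nat.card ↥(Subgroup.normalizer (P : Set S))

/-- `P` is fully `𝒻`-centralized. -/
def FullyCentralized {S : Type*} [Group S] (𝒻 : FusionSystem S) (P : Subgroup S) : Prop :=
  ∀ Q : Subgroup S, FIso 𝒻 P Q →
    Nat.card ↥(Subgroup.centralizer (Q : Set S)) ≤ Nat.card ↥(Subgroup.centralizer (P : Set S))
set_option linter.unusedSectionVars false
section Helpers
variable {S : Type*} [Group S] [Finite S] (𝒻 : FusionSystem S)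

instance finiteMonoidHom (P : Subgroup S) : Finite (↥P →* S) :=
  Finite.of_injective (fun f => (f : ↥P → S)) DFunLike.coe_injective

instance finiteMulAut (P : Subgroup S) : Finite (MulAut ↥P) :=
  Finite.of_injective (fun f => (f : ↥P → ↥P)) DFunLike.coe_injective

lemma FS_subtype_mem (P Q : Subgroup S) (h : P ≤ Q) : P.subtype ∈ 𝒻.Hom P Q := by
  refine 𝒻.conj_mem P Q 1 P.subtype (fun p => by simp) ?_
  rintro x ⟨y, rfl⟩
  exact h y.2

lemma FS_exists_inv {P Q : Subgroup S} {φ : ↥P →* S} (hφ : φ ∈ 𝒻.Hom P Q) (hr : φ.range = Q) :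
    ∃ ψ : ↥Q →* S, ψ ∈ 𝒻.Hom Q P ∧ ψ.range = P ∧
      (∀ (x : ↥P) (y : ↥Q), (y : S) = φ x → (ψ y : S) = x) ∧
      (∀ (x : ↥P) (y : ↥Q), (x : S) = ψ y → (φ x : S) = y) := by
  subst hr
  have hinj := 𝒻.injective hφ
  let e : ↥P ≃* ↥φ.range := MonoidHom.ofInjective hinj
  have he : ∀ x : ↥P, ((e x : ↥φ.range) : S) = φ x := fun x => rfl
  refine ⟨P.subtype.comp e.symm.toMonoidHom, ?_, ?_, ?_, ?_⟩
  · refine 𝒻.inv_mem hφ _ (fun x y hxy => ?_)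
    have : y = e x := Subtype.ext (by rw [he]; exact hxy)
    simp [this]
  · apply le_antisymm
    · rintro x ⟨y, rfl⟩
      exact (e.symm y).2
    · intro x hx
      exact ⟨e ⟨x, hx⟩, by simp⟩
  · intro x y hxy
    have : y = e x := Subtype.ext (by rw [he]; exact hxy)
    simp [this]
  · intro x y hxy
    have : x = e.symm y := Subtype.ext (by simpa using hxy)
    subst this
    rw [← he, MulEquiv.apply_symm_apply]

end Helpers
section Cards
variable {S : Type*} [Group S] [Finite S] (𝒻 : FusionSystem S)

lemma FS_card_hom_pre {P Q : Subgroup S} (h : FIso 𝒻 P Q) (R : Subgroup S) :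
    Nat.card (𝒻.Hom Q R) = Nat.card (𝒻.Hom P R) := by
  obtain ⟨φ, hφ, hr⟩ := h
  obtain ⟨ψ, hψ, hψr, h1, h2⟩ := FS_exists_inv 𝒻 hφ hr
  have hφQ : ∀ x : ↥P, φ x ∈ Q := fun x => hr ▸ ⟨x, rfl⟩
  have hψP : ∀ y : ↥Q, ψ y ∈ P := fun y => hψr ▸ ⟨y, rfl⟩
  let φ' : ↥P →* ↥Q := φ.codRestrict Q hφQ
  let ψ' : ↥Q →* ↥P := ψ.codRestrict P hψP
  refine Nat.card_congr ⟨fun χ => ⟨χ.1.comp φ', ?_⟩, fun χ => ⟨χ.1.comp ψ', ?_⟩, ?_, ?_⟩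
  · refine 𝒻.comp_mem _ hφ χ.2 (fun x y hxy => ?_)
    have : φ' x = y := Subtype.ext hxy.symm
    simp [MonoidHom.comp_apply, this]
  · refine 𝒻.comp_mem _ hψ χ.2 (fun x y hxy => ?_)
    have : ψ' x = y := Subtype.ext hxy.symm
    simp [MonoidHom.comp_apply, this]
  · intro χ
    refine Subtype.ext (MonoidHom.ext fun y => ?_)
    have : φ' (ψ' y) = y := Subtype.ext (h2 (ψ' y) y rfl)
    simp [MonoidHom.comp_apply, this]
  · intro χ
    refine Subtype.ext (MonoidHom.ext fun x => ?_)
    have : ψ' (φ' x) = x := Subtype.ext (h1 x (φ' x) rfl)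
    simp [MonoidHom.comp_apply, this]

lemma FS_card_hom_post {P Q : Subgroup S} (h : FIso 𝒻 P Q) (R : Subgroup S) :
    Nat.card (𝒻.Hom R Q) = Nat.card (𝒻.Hom R P) := by
  obtain ⟨φ, hφ, hr⟩ := h
  obtain ⟨ψ, hψ, hψr, h1, h2⟩ := FS_exists_inv 𝒻 hφ hr
  have hφQ : ∀ x : ↥P, φ x ∈ Q := fun x => hr ▸ ⟨x, rfl⟩
  have hψP : ∀ y : ↥Q, ψ y ∈ P := fun y => hψr ▸ ⟨y, rfl⟩
  have hQm : ∀ (χ : ↥R →* S), χ ∈ 𝒻.Hom R Q → ∀ x, χ x ∈ Q :=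
    fun χ hχ x => 𝒻.range_le hχ ⟨x, rfl⟩
  have hPm : ∀ (χ : ↥R →* S), χ ∈ 𝒻.Hom R P → ∀ x, χ x ∈ P :=
    fun χ hχ x => 𝒻.range_le hχ ⟨x, rfl⟩
  refine Nat.card_congr ⟨fun χ => ⟨ψ.comp (χ.1.codRestrict Q (hQm χ.1 χ.2)), ?_⟩,
    fun χ => ⟨φ.comp (χ.1.codRestrict P (hPm χ.1 χ.2)), ?_⟩, fun χ => ?_, fun χ => ?_⟩
  · refine 𝒻.comp_mem _ χ.2 hψ (fun x y hxy => ?_)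
    exact congrArg (fun z : ↥Q => ψ z)
      (Subtype.ext hxy.symm : (⟨χ.1 x, hQm χ.1 χ.2 x⟩ : ↥Q) = y)
  · refine 𝒻.comp_mem _ χ.2 hφ (fun x y hxy => ?_)
    exact congrArg (fun z : ↥P => φ z)
      (Subtype.ext hxy.symm : (⟨χ.1 x, hPm χ.1 χ.2 x⟩ : ↥P) = y)
  · refine Subtype.ext (MonoidHom.ext fun x => ?_)
    exact h2 ⟨ψ ⟨χ.1 x, hQm χ.1 χ.2 x⟩, hψP _⟩ ⟨χ.1 x, hQm χ.1 χ.2 x⟩ rfl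
  · refine Subtype.ext (MonoidHom.ext fun x => ?_)
    exact h1 ⟨χ.1 x, hPm χ.1 χ.2 x⟩ ⟨φ ⟨χ.1 x, hPm χ.1 χ.2 x⟩, hφQ _⟩ rfl

end Cards
section AutF
variable {S : Type*} [Group S] [Finite S] (𝒻 : FusionSystem S)

lemma FS_hom_congr {P Q R : Subgroup S} (h : P = Q) {φ : ↥P →* S} (hφ : φ ∈ 𝒻.Hom P R) :
    φ.comp (MulEquiv.subgroupCongr h.symm).toMonoidHom ∈ 𝒻.Hom Q R := by
  subst h
  have : φ.comp (MulEquiv.subgroupCongr rfl).toMonoidHom = φ :=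
    MonoidHom.ext fun x => congrArg φ (Subtype.ext rfl)
  rwa [this]

/-- `Aut_𝒻(P)` as a subgroup of `MulAut ↥P`. -/
def AutF (P : Subgroup S) : Subgroup (MulAut ↥P) where
  carrier := {f | P.subtype.comp f.toMonoidHom ∈ 𝒻.Hom P P}
  one_mem' := by
    refine 𝒻.conj_mem P P 1 _ (fun p => by simp) ?_
    rintro x ⟨y, rfl⟩
    simpa using y.2
  mul_mem' := by
    intro f g hf hg
    refine 𝒻.comp_mem _ hg hf (fun x y hxy => ?_)
    exact congrArg (fun z : ↥P => (f z : S)) (Subtype.ext hxy.symm : g x = y)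
  inv_mem' := by
    intro f hf
    have hr : (P.subtype.comp f.toMonoidHom).range = P := by
      apply le_antisymm
      · rintro x ⟨y, rfl⟩
        exact (f y).2
      · intro x hx
        exact ⟨f⁻¹ ⟨x, hx⟩, by simp⟩
    have hψ : (P.subtype.comp ((f⁻¹).toMonoidHom.comp
        (MulEquiv.subgroupCongr hr).toMonoidHom)) ∈
          𝒻.Hom (P.subtype.comp f.toMonoidHom).range P := by
      refine 𝒻.inv_mem hf _ (fun x y hxy => ?_)
      have h1 : (MulEquiv.subgroupCongr hr) y = f x := Subtype.ext hxy
      have h2 : f⁻¹ ((MulEquiv.subgroupCongr hr) y) = x := by rw [h1]; simp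
      exact congrArg (fun z : ↥P => (z : S)) h2
    have := FS_hom_congr 𝒻 hr hψ
    have heq : (P.subtype.comp ((f⁻¹).toMonoidHom.comp
        (MulEquiv.subgroupCongr hr).toMonoidHom)).comp
          (MulEquiv.subgroupCongr hr.symm).toMonoidHom
        = P.subtype.comp (f⁻¹).toMonoidHom := by
      refine MonoidHom.ext fun x => ?_
      simp only [MonoidHom.comp_apply]
      congr 1
    rwa [heq] at this

lemma FS_card_autF (P : Subgroup S) : Nat.card ↥(AutF 𝒻 P) = Nat.card (𝒻.Hom P P) := by
  have key : ∀ χ : ↥(𝒻.Hom P P), Function.Bijective (χ.1.codRestrict P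
      (fun x => 𝒻.range_le χ.2 ⟨x, rfl⟩)) := by
    intro χ
    rw [← Finite.injective_iff_bijective]
    intro x y hxy
    exact 𝒻.injective χ.2 (congrArg (fun z : ↥P => (z : S)) hxy)
  refine Nat.card_congr ⟨fun f => ⟨P.subtype.comp f.1.toMonoidHom, f.2⟩,
    fun χ => ⟨MulEquiv.ofBijective _ (key χ), χ.2⟩, fun f => ?_, fun χ => ?_⟩
  · exact Subtype.ext (MulEquiv.ext fun x => Subtype.ext rfl)
  · exact Subtype.ext (MonoidHom.ext fun x => rfl)

lemma FS_exists_autS (R : Subgroup S) :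
    ∃ b : ℕ, 0 < b ∧ b * Nat.card ↥(Subgroup.centralizer (R : Set S)) = Nat.card ↥(Subgroup.normalizer (R : Set S)) ∧
      b ∣ Nat.card (𝒻.Hom R R) := by
  classical
  set θ := R.normalizerMonoidHom with hθ
  refine ⟨Nat.card ↥θ.range, Nat.card_pos, ?_, ?_⟩
  · have hle : Subgroup.centralizer (R : Set S) ≤ Subgroup.normalizer (R : Set S) := by
      intro x hx
      rw [Subgroup.mem_normalizer_iff]
      intro h
      constructor
      · intro hh
        have h1 := Subgroup.mem_centralizer_iff.mp hx h hh
        have h2 : x * h * x⁻¹ = h := by rw [← h1]; exact mul_inv_cancel_right h x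
        rwa [h2]
      · intro hh'
        have hc := Subgroup.mem_centralizer_iff.mp hx _ hh'
        have h2 : x * h = x * (x * h * x⁻¹) := by rw [← hc, inv_mul_cancel_right]
        have h3 : h = x * h * x⁻¹ := mul_left_cancel h2
        rwa [h3]
    have e1 : Nat.card ↥θ.range = Nat.card (↥(Subgroup.normalizer (R : Set S)) ⧸ θ.ker) :=
      (Nat.card_congr (QuotientGroup.quotientKerEquivRange θ).toEquiv).symm
    have e2 : Nat.card ↥θ.ker = Nat.card ↥(Subgroup.centralizer (R : Set S)) := by
      rw [hθ, Subgroup.normalizerMonoidHom_ker]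
      exact Nat.card_congr (Subgroup.subgroupOfEquivOfLe hle).toEquiv
    rw [e1, ← e2]
    exact (Subgroup.card_eq_card_quotient_mul_card_subgroup θ.ker).symm
  · have hle2 : θ.range ≤ AutF 𝒻 R := by
      rintro f ⟨n, rfl⟩
      refine 𝒻.conj_mem R R (n : S) _ (fun p => rfl) ?_
      rintro x ⟨y, rfl⟩
      exact (θ n y).2
    calc Nat.card ↥θ.range ∣ Nat.card ↥(AutF 𝒻 R) := Subgroup.card_dvd_of_le hle2
      _ = Nat.card (𝒻.Hom R R) := FS_card_autF 𝒻 R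

end AutF
section Orbits

lemma FS_dvd_of_le_ppow {p : ℕ} (hp : p.Prime) {x y s : ℕ} (hx : x ∣ p ^ s) (hy : y ∣ p ^ s)
    (h : x ≤ y) : x ∣ y := by
  obtain ⟨i, hi, rfl⟩ := (Nat.dvd_prime_pow hp).mp hx
  obtain ⟨j, hj, rfl⟩ := (Nat.dvd_prime_pow hp).mp hy
  exact pow_dvd_pow _ ((Nat.pow_le_pow_iff_right hp.one_lt).mp h)

lemma FS_dvd_card_of_orbits {G X : Type*} [Group G] [MulAction G X] [Finite G] [Finite X] {d : ℕ}
    (h : ∀ x : X, d ∣ Nat.card G / Nat.card ↥(MulAction.stabilizer G x)) : d ∣ Nat.card X := by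
  classical
  letI : Fintype G := Fintype.ofFinite G
  letI : Fintype X := Fintype.ofFinite X
  letI : Fintype (MulAction.orbitRel.Quotient G X) := Fintype.ofFinite _
  rw [Nat.card_eq_fintype_card, MulAction.card_eq_sum_card_group_div_card_stabilizer G X]
  refine Finset.dvd_sum fun ω _ => ?_
  simpa [Nat.card_eq_fintype_card] using h ω.out

variable {S : Type*} [Group S] [Finite S] (𝒻 : FusionSystem S) (P : Subgroup S)

/-- The conjugation morphism `↥⊤ →* S` belongs to `Hom ⊤ ⊤`. -/
lemma FS_conj_top_mem (s : S) :
    (MulAut.conj s).toMonoidHom.comp (⊤ : Subgroup S).subtype ∈ 𝒻.Hom ⊤ ⊤ :=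
  𝒻.conj_mem ⊤ ⊤ s _ (fun p => rfl) le_top

/-- The action of `S × Aut_𝒻(P)` on `Hom_𝒻(P, S)`. -/
def FSmul (g : S × ↥(AutF 𝒻 P)) (φ : ↥(𝒻.Hom P ⊤)) : ↥(𝒻.Hom P ⊤) := by
  refine ⟨((MulAut.conj g.1).toMonoidHom.comp φ.1).comp ((g.2 : MulAut ↥P)⁻¹).toMonoidHom, ?_⟩
  have h1 : φ.1.comp ((g.2 : MulAut ↥P)⁻¹).toMonoidHom ∈ 𝒻.Hom P ⊤ := by
    refine 𝒻.comp_mem _ ((AutF 𝒻 P).inv_mem g.2.2) φ.2 (fun x y hxy => ?_)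
    exact congrArg φ.1 (Subtype.ext hxy.symm : ((g.2 : MulAut ↥P)⁻¹) x = y)
  refine 𝒻.comp_mem _ h1 (FS_conj_top_mem 𝒻 g.1) (fun x y hxy => ?_)
  show g.1 * (φ.1.comp ((g.2 : MulAut ↥P)⁻¹).toMonoidHom) x * g.1⁻¹ = g.1 * (y : S) * g.1⁻¹
  rw [hxy]

instance FSact : MulAction (S × ↥(AutF 𝒻 P)) ↥(𝒻.Hom P ⊤) where
  smul := FSmul 𝒻 P
  one_smul φ := by
    refine Subtype.ext (MonoidHom.ext fun x => ?_)
    show (1 : S) * φ.1 (((1 : ↥(AutF 𝒻 P)) : MulAut ↥P)⁻¹ x) * (1 : S)⁻¹ = φ.1 x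
    simp
  mul_smul g h φ := by
    refine Subtype.ext (MonoidHom.ext fun x => ?_)
    show (g.1 * h.1) * φ.1 ((((g.2 * h.2 : ↥(AutF 𝒻 P)) : MulAut ↥P))⁻¹ x) * (g.1 * h.1)⁻¹
      = g.1 * ((h.1 * φ.1 (((h.2 : MulAut ↥P))⁻¹ (((g.2 : MulAut ↥P))⁻¹ x)) * h.1⁻¹)) * g.1⁻¹
    have : (((g.2 * h.2 : ↥(AutF 𝒻 P)) : MulAut ↥P))⁻¹ x
        = ((h.2 : MulAut ↥P))⁻¹ (((g.2 : MulAut ↥P))⁻¹ x) := by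
      simp [mul_inv_rev]
    rw [this]
    group

end Orbits
section OrbitMain
variable {S : Type*} [Group S] [Finite S] (𝒻 : FusionSystem S)

lemma FS_orbit_dvd {p : ℕ} (hp : p.Prime) (hS : IsPGroup p S) (P : Subgroup S)
    (hfn : FullyNormalized 𝒻 P) :
    (Nat.card S / Nat.card ↥(Subgroup.normalizer (P : Set S))) * Nat.card (𝒻.Hom P P) ∣ Nat.card (𝒻.Hom P ⊤) := by
  have : Fact p.Prime := ⟨hp⟩
  obtain ⟨s, hs⟩ := IsPGroup.iff_card.mp hS
  refine FS_dvd_card_of_orbits (G := S × ↥(AutF 𝒻 P)) (fun x => ?_)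
  set G := S × ↥(AutF 𝒻 P)
  set Q := x.1.range with hQ
  have heq : ∀ (g : ↥(MulAction.stabilizer G x)) (z : ↥P),
      g.1.1 * x.1 (((g.1.2 : MulAut ↥P))⁻¹ z) * g.1.1⁻¹ = x.1 z :=
    fun g z => congrArg (fun χ : ↥(𝒻.Hom P ⊤) => χ.1 z) g.2
  have hmem : ∀ g : ↥(MulAction.stabilizer G x), g.1.1 ∈ Subgroup.normalizer (Q : Set S) := by
    intro g
    rw [Subgroup.mem_normalizer_iff]
    intro h
    constructor
    · rintro ⟨z, rfl⟩
      refine ⟨(g.1.2 : MulAut ↥P) z, ?_⟩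
      have h5 := heq g ((g.1.2 : MulAut ↥P) z)
      have h4 : ((g.1.2 : MulAut ↥P))⁻¹ ((g.1.2 : MulAut ↥P) z) = z := by simp
      rw [h4] at h5
      exact h5.symm
    · rintro ⟨z, hz⟩
      have h2 := heq g z
      rw [hz] at h2
      have h3 : x.1 (((g.1.2 : MulAut ↥P))⁻¹ z) = h :=
        mul_left_cancel (mul_right_cancel h2)
      exact ⟨_, h3⟩
  let σ : ↥(MulAction.stabilizer G x) →* ↥(Subgroup.normalizer (Q : Set S)) :=
    MonoidHom.mk' (fun g => ⟨g.1.1, hmem g⟩) (fun g h => rfl)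
  have hinj : Function.Injective σ := by
    intro g g' hgg
    have h1 : g.1.1 = g'.1.1 := congrArg Subtype.val hgg
    have h2 : ((g.1.2 : MulAut ↥P))⁻¹ = ((g'.1.2 : MulAut ↥P))⁻¹ := by
      refine MulEquiv.ext fun z => ?_
      refine 𝒻.injective x.2 ?_
      have e1 := heq g z
      have e2 := heq g' z
      rw [← h1] at e2
      rw [← e2] at e1
      exact mul_left_cancel (mul_right_cancel e1)
    have h3 : g.1.2 = g'.1.2 := Subtype.ext (inv_injective h2)
    exact Subtype.ext (Prod.ext h1 h3)
  have hst : Nat.card ↥(MulAction.stabilizer G x) ∣ Nat.card ↥(Subgroup.normalizer (Q : Set S)) := by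
    calc Nat.card ↥(MulAction.stabilizer G x)
        = Nat.card ↥σ.range := Nat.card_congr (MonoidHom.ofInjective hinj).toEquiv
      _ ∣ Nat.card ↥(Subgroup.normalizer (Q : Set S)) := Subgroup.card_subgroup_dvd_card _
  have hQn_le : Nat.card ↥(Subgroup.normalizer (Q : Set S)) ≤ Nat.card ↥(Subgroup.normalizer (P : Set S)) :=
    hfn Q ⟨x.1, 𝒻.isoOnto_mem x.2, rfl⟩
  have h1 : Nat.card ↥(Subgroup.normalizer (Q : Set S)) ∣ p ^ s := hs ▸ Subgroup.card_subgroup_dvd_card _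
  have h2 : Nat.card ↥(Subgroup.normalizer (P : Set S)) ∣ p ^ s := hs ▸ Subgroup.card_subgroup_dvd_card _
  have ht : Nat.card ↥(MulAction.stabilizer G x) ∣ Nat.card ↥(Subgroup.normalizer (P : Set S)) :=
    hst.trans (FS_dvd_of_le_ppow hp h1 h2 hQn_le)
  obtain ⟨w, hw⟩ := ht
  obtain ⟨u, hu⟩ : Nat.card ↥(Subgroup.normalizer (P : Set S)) ∣ Nat.card S := Subgroup.card_subgroup_dvd_card _
  have hG : Nat.card G = Nat.card S * Nat.card (𝒻.Hom P P) := by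
    rw [Nat.card_prod, FS_card_autF]
  have hstabpos : 0 < Nat.card ↥(MulAction.stabilizer G x) := Nat.card_pos
  have hnpos : 0 < Nat.card ↥(Subgroup.normalizer (P : Set S)) := Nat.card_pos
  have e1 : Nat.card G / Nat.card ↥(MulAction.stabilizer G x)
      = w * (u * Nat.card (𝒻.Hom P P)) := by
    rw [hG, hu, hw]
    rw [show Nat.card ↥(MulAction.stabilizer G x) * w * u * Nat.card (𝒻.Hom P P)
      = Nat.card ↥(MulAction.stabilizer G x) * (w * (u * Nat.card (𝒻.Hom P P))) by ring]
    exact Nat.mul_div_cancel_left _ hstabpos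
  have e2 : Nat.card S / Nat.card ↥(Subgroup.normalizer (P : Set S)) = u := by
    rw [hu, Nat.mul_div_cancel_left _ hnpos]
  rw [e1, e2]
  exact Dvd.intro_left w (by ring)

end OrbitMain
/-- if `𝒻` is a fusion system on a finite `p`-group `S` with
`|S| / (|Hom_𝒻(Q,S)|·|C_S(Q)|) ∈ ℤ_(p)` for every `Q ≤ S` (equivalently: the
`p`-part of `|Hom_𝒻(Q,S)|·|C_S(Q)|` divides `|S|`), then `P ≤ S` is fully
`𝒻`-normalized iff `P` is fully `𝒻`-centralized and `Aut_S(P)` is a Sylow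
`p`-subgroup of `Aut_𝒻(P)`.  The Sylow condition is stated numerically: the
index `[Aut_𝒻(P) : Aut_S(P)] = m` is prime to `p`, i.e.
`|Aut_𝒻(P)|·|C_S(P)| = m·|N_S(P)|` with `p ∤ m`, using
`Aut_𝒻(P) = Hom_𝒻(P,P)` and `|Aut_S(P)| = |N_S(P)|/|C_S(P)|`. -/
theorem stmt17 {p : ℕ} (hp : p.Prime) {S : Type*} [Group S] [Finite S]
    (hS : IsPGroup p S) (𝒻 : FusionSystem S)
    (hcond : ∀ Q : Subgroup S,
      p ^ ((Nat.card (𝒻.Hom Q ⊤) *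
          Nat.card (Subgroup.centralizer (Q : Set S))).factorization p) ∣
        Nat.card S)
    (P : Subgroup S) :
    FullyNormalized 𝒻 P ↔
      (FullyCentralized 𝒻 P ∧ ∃ m : ℕ, ¬ p ∣ m ∧
        Nat.card (𝒻.Hom P P) * Nat.card (Subgroup.centralizer (P : Set S)) =
          m * Nat.card ↥(Subgroup.normalizer (P : Set S))) := by

  classical
  have : Fact p.Prime := ⟨hp⟩
  obtain ⟨s, hs⟩ := IsPGroup.iff_card.mp hS
  have hane : Nonempty ↥(𝒻.Hom P P) := ⟨⟨P.subtype, FS_subtype_mem 𝒻 P P le_rfl⟩⟩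
  have hhne : Nonempty ↥(𝒻.Hom P ⊤) := ⟨⟨P.subtype, FS_subtype_mem 𝒻 P ⊤ le_top⟩⟩
  set a := Nat.card (𝒻.Hom P P) with ha
  set c := Nat.card ↥(Subgroup.centralizer (P : Set S)) with hc
  set n := Nat.card ↥(Subgroup.normalizer (P : Set S)) with hn
  set h := Nat.card (𝒻.Hom P ⊤) with hh
  have hapos : 0 < a := Nat.card_pos
  have hhpos : 0 < h := Nat.card_pos
  have hcpos : 0 < c := Nat.card_pos
  have hnpos : 0 < n := Nat.card_pos
  have hcdvd : c ∣ p ^ s := hs ▸ Subgroup.card_subgroup_dvd_card _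
  have hndvd : n ∣ p ^ s := hs ▸ Subgroup.card_subgroup_dvd_card _
  obtain ⟨γ, hγs, hγ⟩ := (Nat.dvd_prime_pow hp).mp hcdvd
  obtain ⟨ν, hνs, hν⟩ := (Nat.dvd_prime_pow hp).mp hndvd
  have hγfact : c.factorization p = γ := by
    rw [hγ, Nat.Prime.factorization_pow hp]; simp
  have hνfact : n.factorization p = ν := by
    rw [hν, Nat.Prime.factorization_pow hp]; simp
  constructor
  · -- forward direction
    intro hfn
    obtain ⟨b, hbpos, hbc, hba⟩ := FS_exists_autS 𝒻 P
    rw [← hc, ← hn] at hbc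
    rw [← ha] at hba
    have hd := FS_orbit_dvd 𝒻 hp hS P hfn
    rw [← hn, ← ha, ← hh] at hd
    have hbdvdn : b ∣ n := ⟨c, hbc.symm⟩
    obtain ⟨β, hβs, hβ⟩ := (Nat.dvd_prime_pow hp).mp (hbdvdn.trans hndvd)
    have hβγν : β + γ = ν := by
      have : p ^ (β + γ) = p ^ ν := by rw [pow_add, ← hβ, ← hγ, hbc, hν]
      exact Nat.pow_right_injective hp.two_le this
    have hsn : Nat.card S / n = p ^ (s - ν) := by
      rw [hs, hν, Nat.pow_div hνs hp.pos]
    rw [hsn] at hd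
    have hdh : p ^ ((s - ν) + a.factorization p) ∣ h := by
      rw [pow_add]
      exact dvd_trans (mul_dvd_mul_left _ (Nat.ordProj_dvd a p)) hd
    have e1 : (s - ν) + a.factorization p ≤ h.factorization p :=
      (hp.pow_dvd_iff_le_factorization hhpos.ne').mp hdh
    have e2 : h.factorization p + γ ≤ s := by
      have h2 := hcond P
      rw [hs, ← hc, ← hh] at h2
      have h3 : (h * c).factorization p ≤ s := (Nat.pow_dvd_pow_iff_le_right hp.one_lt).mp h2
      rwa [Nat.factorization_mul hhpos.ne' hcpos.ne', Finsupp.add_apply, hγfact] at h3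
    have e3 : β ≤ a.factorization p :=
      (hp.pow_dvd_iff_le_factorization hapos.ne').mp (hβ ▸ hba)
    have hαβ : a.factorization p = β := by omega
    have hth : s - γ ≤ h.factorization p := by omega
    constructor
    · -- fully centralized
      intro Q hQ
      have hhQ : Nat.card (𝒻.Hom Q ⊤) = h := FS_card_hom_pre 𝒻 hQ ⊤
      have hcQpos : 0 < Nat.card ↥(Subgroup.centralizer (Q : Set S)) := Nat.card_pos
      obtain ⟨γQ, hγQs, hγQ⟩ := (Nat.dvd_prime_pow hp).mp
        (hs ▸ Subgroup.card_subgroup_dvd_card (Subgroup.centralizer (Q : Set S)))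
      have hγQfact : (Nat.card ↥(Subgroup.centralizer (Q : Set S))).factorization p = γQ := by
        rw [hγQ, Nat.Prime.factorization_pow hp]; simp
      have e4 : h.factorization p + γQ ≤ s := by
        have h2 := hcond Q
        rw [hs, hhQ] at h2
        have hQhpos : (0:ℕ) < h := hhpos
        have h3 : (h * Nat.card ↥(Subgroup.centralizer (Q : Set S))).factorization p ≤ s :=
          (Nat.pow_dvd_pow_iff_le_right hp.one_lt).mp h2
        rwa [Nat.factorization_mul hhpos.ne' hcQpos.ne', Finsupp.add_apply, hγQfact] at h3
      have hγQγ : γQ ≤ γ := by omega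
      show Nat.card ↥(Subgroup.centralizer (Q : Set S)) ≤ c
      rw [hγQ, hγ]
      exact Nat.pow_le_pow_right hp.pos hγQγ
    · -- Sylow condition
      refine ⟨a / b, ?_, ?_⟩
      · intro hdvd
        have h4 : p ^ (β + 1) ∣ a := by
          rw [pow_succ, ← hβ, ← Nat.mul_div_cancel' hba]
          exact mul_dvd_mul_left b hdvd
        have := (hp.pow_dvd_iff_le_factorization hapos.ne').mp h4
        omega
      · calc a * c = (b * (a / b)) * c := by rw [Nat.mul_div_cancel' hba]
          _ = (a / b) * (b * c) := by ring
          _ = (a / b) * n := by rw [hbc]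
  · -- backward direction
    rintro ⟨hfc, m, hpm, hme⟩ Q hQ
    obtain ⟨bQ, hbQpos, hbQc, hbQa⟩ := FS_exists_autS 𝒻 Q
    have haQ : Nat.card (𝒻.Hom Q Q) = a := by
      rw [FS_card_hom_pre 𝒻 hQ Q, FS_card_hom_post 𝒻 hQ P, ← ha]
    rw [haQ] at hbQa
    have hm0 : m ≠ 0 := by
      rintro rfl
      rw [zero_mul] at hme
      exact (Nat.mul_pos hapos hcpos).ne' hme
    have hfac : a.factorization p + γ = ν := by
      have h1 : (a * c).factorization p = (m * n).factorization p := by rw [hme]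
      rwa [Nat.factorization_mul hapos.ne' hcpos.ne', Nat.factorization_mul hm0 hnpos.ne',
        Finsupp.add_apply, Finsupp.add_apply, Nat.factorization_eq_zero_of_not_dvd hpm,
        zero_add, hγfact, hνfact] at h1
    have hbQn : bQ ∣ Nat.card ↥(Subgroup.normalizer (Q : Set S)) := ⟨_, hbQc.symm⟩
    have hbQdvd : bQ ∣ p ^ s := hbQn.trans (hs ▸ Subgroup.card_subgroup_dvd_card _)
    obtain ⟨βQ, hβQs, hβQ⟩ := (Nat.dvd_prime_pow hp).mp hbQdvd
    have hβQα : βQ ≤ a.factorization p :=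
      (hp.pow_dvd_iff_le_factorization hapos.ne').mp (hβQ ▸ hbQa)
    have hcQ : Nat.card ↥(Subgroup.centralizer (Q : Set S)) ≤ c := hfc Q hQ
    have hbQle : bQ ≤ p ^ (a.factorization p) := by
      rw [hβQ]
      exact Nat.pow_le_pow_right hp.pos hβQα
    calc Nat.card ↥(Subgroup.normalizer (Q : Set S)) = bQ * Nat.card ↥(Subgroup.centralizer (Q : Set S)) :=
          hbQc.symm
      _ ≤ p ^ (a.factorization p) * c := Nat.mul_le_mul hbQle hcQ
      _ = n := by rw [hγ, ← pow_add, hfac, ← hν]
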